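/- Let n ≥ 3, d ≥ 2, and let τ(p) = ρ_{A₁B₁}(p) ⊗ ⊗_{i=2}^{n−1} φ⁺_{A_iB_i} be the n-partite pair-entangled-network state on the star graph with center party A = A₁⋯A_{n−1} and leaf parties B₁,…,B_{n−1}, where the edge A₁B₁ carries the d-dimensional isotropic state with visibility p and every other edge A_iB_i carries the projector onto the d-dimensional maximally entangled state |φ⁺_d⟩. If p > 1/(d+1), then τ(p) is genuinely multipartite entangled. -/

import Mathlib

open scoped BigOperators ComplexOrder

noncomputable section

/-- Projector onto the `d`-dimensional maximally entangled state
`|φ⁺_d⟩ = (1/√d) ∑ᵢ |ii⟩`, as a matrix on `ℂ^d ⊗ ℂ^d`. -/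
def phiPlus (d : ℕ) : Matrix (Fin d × Fin d) (Fin d × Fin d) ℂ :=
  fun x y => if x.1 = x.2 ∧ y.1 = y.2 then (1 / (d : ℂ)) else 0

/-- The `d`-dimensional isotropic state with visibility `p`:
`ρ(p) = p φ⁺_d + (1-p) 𝟙/d²`. -/
def iso (d : ℕ) (p : ℝ) : Matrix (Fin d × Fin d) (Fin d × Fin d) ℂ :=
  (p : ℂ) • phiPlus d +
    (((1 - p) / (d : ℝ) ^ 2 : ℝ) : ℂ) • (1 : Matrix (Fin d × Fin d) (Fin d × Fin d) ℂ)

/-- The (possibly unnormalized) projector `|ψ⟩⟨ψ|` onto a vector `ψ`. -/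
def vecProj {ι : Type} (ψ : ι → ℂ) : Matrix ι ι ℂ :=
  fun i j => ψ i * (starRingEnd ℂ) (ψ j)

/-- A multipartite pure-state vector (parties indexed by `ι`, party `i` holding the
finite-dimensional space with basis `H i`) factors as a tensor product across the
bipartition `M | Mᶜ`: `ψ = f ⊗ g` where `f` depends only on the coordinates of the
parties in `M` and `g` only on those of the parties outside `M`. -/
def FactorsAcross {ι : Type} {H : ι → Type} (M : Finset ι)
    (ψ : ((i : ι) → H i) → ℂ) : Prop :=
  ∃ f g : ((i : ι) → H i) → ℂ,
    (∀ x, ψ x = f x * g x) ∧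
    (∀ x y, (∀ i ∈ M, x i = y i) → f x = f y) ∧
    (∀ x y, (∀ i, i ∉ M → x i = y i) → g x = g y)

/-- A multipartite pure-state vector is biseparable: it factors across some nonempty
proper bipartition of the parties. -/
def PureBiseparable {ι : Type} [Fintype ι] {H : ι → Type}
    (ψ : ((i : ι) → H i) → ℂ) : Prop :=
  ∃ M : Finset ι, M.Nonempty ∧ M ≠ Finset.univ ∧ FactorsAcross M ψ

/-- A multipartite density matrix is biseparable if it is a finite convex combination
of projectors onto normalized biseparable pure states.  A state which is not
biseparable is genuinely multipartite entangled (GME). -/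
def Biseparable {ι : Type} [Fintype ι] [DecidableEq ι] {H : ι → Type}
    [∀ i, Fintype (H i)]
    (ρ : Matrix ((i : ι) → H i) ((i : ι) → H i) ℂ) : Prop :=
  ∃ (k : ℕ) (w : Fin k → ℝ) (ψ : Fin k → ((i : ι) → H i) → ℂ),
    (∀ t, 0 ≤ w t) ∧ (∑ t, w t = 1) ∧
    (∀ t, PureBiseparable (ψ t)) ∧
    (∀ t, ∑ x, Complex.normSq (ψ t x) = 1) ∧
    ρ = ∑ t, (w t : ℂ) • vecProj (ψ t)

/-- Local Hilbert-space basis for the star network with `m + 1` leaves: the central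
party (`none`) holds `m + 1` qudits, one for each edge, while each leaf party `some j`
holds a single qudit. -/
def starH (d m : ℕ) : Option (Fin (m + 1)) → Type
  | none => Fin (m + 1) → Fin d
  | some _ => Fin d

instance starH.fintype (d m : ℕ) : ∀ i, Fintype (starH d m i)
  | none => inferInstanceAs (Fintype (Fin (m + 1) → Fin d))
  | some _ => inferInstanceAs (Fintype (Fin d))

instance starH.decEq (d m : ℕ) : ∀ i, DecidableEq (starH d m i)
  | none => inferInstanceAs (DecidableEq (Fin (m + 1) → Fin d))
  | some _ => inferInstanceAs (DecidableEq (Fin d))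

/-- The `(m+2)`-partite star PEN state `τ(p)`: the edge between the center and leaf `0`
carries the `d`-dimensional isotropic state with visibility `p`, and each edge between
the center and a leaf `j ≠ 0` carries the projector onto the `d`-dimensional maximally
entangled state. -/
def tauStar (d m : ℕ) (p : ℝ) :
    Matrix ((i : Option (Fin (m + 1))) → starH d m i)
           ((i : Option (Fin (m + 1))) → starH d m i) ℂ :=
  fun u v => ∏ j : Fin (m + 1),
    (if j = 0 then iso d p else phiPlus d)
      (u none j, u (some j)) (v none j, v (some j))


/-- The "diagonal" configuration of the star network determined by `a`:
the center holds `a` and leaf `j` holds `a j`. -/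
def diagX (d m : ℕ) (a : Fin (m + 1) → Fin d) : (i : Option (Fin (m + 1))) → starH d m i
  | none => a
  | some j => a j

lemma helper_bound (d m : ℕ) (hd : 1 ≤ d) (M : Finset (Option (Fin (m+1)))) (j0 : Fin (m+1))
    (hnM : none ∉ M) (hjM : some j0 ∈ M)
    (f g : ((i : Option (Fin (m+1))) → starH d m i) → ℂ)
    (hf : ∀ x y, (∀ i ∈ M, x i = y i) → f x = f y)
    (hg : ∀ x y, (∀ i, i ∉ M → x i = y i) → g x = g y)
    (hnorm : ∑ x, Complex.normSq (f x * g x) = 1) :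
    Complex.normSq (∑ a : Fin (m+1) → Fin d, f (diagX d m a) * g (diagX d m a)) ≤ (d:ℝ)^m := by
  classical
  set e := Equiv.piEquivPiSubtypeProd (fun i => i ∈ M) (starH d m) with he
  have hd0 : 0 < d := hd
  set x₀ : (i : Option (Fin (m+1))) → starH d m i := diagX d m (fun _ => ⟨0, hd0⟩) with hx₀
  set F : ((i : {i // i ∈ M}) → starH d m i) → ℂ := fun u => f (e.symm (u, (e x₀).2)) with hF
  set G : ((i : {i // ¬ i ∈ M}) → starH d m i) → ℂ := fun v => g (e.symm ((e x₀).1, v)) with hG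
  have hFf : ∀ x, f x = F ((e x).1) := by
    intro x
    apply hf
    intro i hi
    simp [he, Equiv.piEquivPiSubtypeProd, hi]
  have hGg : ∀ x, g x = G ((e x).2) := by
    intro x
    apply hg
    intro i hi
    simp [he, Equiv.piEquivPiSubtypeProd, hi]
  set SF := ∑ u, Complex.normSq (F u) with hSF
  set SG := ∑ v, Complex.normSq (G v) with hSG
  have hsplit : SF * SG = 1 := by
    rw [← hnorm]
    have : ∀ x, Complex.normSq (f x * g x)
        = Complex.normSq (F ((e x).1)) * Complex.normSq (G ((e x).2)) := by
      intro x; rw [Complex.normSq_mul, ← hFf, ← hGg]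
    rw [Finset.sum_congr rfl (fun x _ => this x)]
    have step : (∑ x, Complex.normSq (F ((e x).1)) * Complex.normSq (G ((e x).2)))
        = ∑ y : ((i : {i // i ∈ M}) → starH d m i) × ((i : {i // ¬ i ∈ M}) → starH d m i),
            Complex.normSq (F y.1) * Complex.normSq (G y.2) :=
      Fintype.sum_equiv e _ _ (fun x => rfl)
    rw [step, Fintype.sum_prod_type, hSF, hSG, Finset.sum_mul_sum]
  set S1 := ∑ a : Fin (m+1) → Fin d, Complex.normSq (f (diagX d m a)) with hS1
  set S2 := ∑ a : Fin (m+1) → Fin d, Complex.normSq (g (diagX d m a)) with hS2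
  have hCS : Complex.normSq (∑ a : Fin (m+1) → Fin d, f (diagX d m a) * g (diagX d m a))
      ≤ S1 * S2 := by
    have h1 : ‖(∑ a : Fin (m+1) → Fin d, f (diagX d m a) * g (diagX d m a))‖
        ≤ ∑ a : Fin (m+1) → Fin d, ‖(f (diagX d m a))‖ * ‖(g (diagX d m a))‖ := by
      refine le_trans (norm_sum_le _ _) ?_
      simp [map_mul]
    have h2 := Finset.sum_mul_sq_le_sq_mul_sq Finset.univ
      (fun a : Fin (m+1) → Fin d => ‖(f (diagX d m a))‖)
      (fun a : Fin (m+1) → Fin d => ‖(g (diagX d m a))‖)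
    have h3 : Complex.normSq (∑ a : Fin (m+1) → Fin d, f (diagX d m a) * g (diagX d m a))
        ≤ (∑ a : Fin (m+1) → Fin d, ‖(f (diagX d m a))‖ * ‖(g (diagX d m a))‖)^2 := by
      rw [← Complex.sq_norm]
      exact pow_le_pow_left₀ (norm_nonneg _) h1 2
    refine le_trans h3 (le_trans h2 ?_)
    apply le_of_eq
    rw [hS1, hS2]
    congr 1 <;> exact Finset.sum_congr rfl (fun a _ => Complex.sq_norm _)
  have hS1le : S1 ≤ (d:ℝ)^m * SF := by
    set ι : (Fin (m+1) → Fin d) → ((i : {i // i ∈ M}) → starH d m i) × (Fin m → Fin d) :=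
      fun a => ((e (diagX d m a)).1, fun k => a (j0.succAbove k)) with hι
    have hinj : Function.Injective ι := by
      intro a b hab
      simp only [hι, Prod.mk.injEq] at hab
      obtain ⟨h1, h2⟩ := hab
      funext j
      by_cases hj : j = j0
      · subst hj
        have := congrFun h1 ⟨some j, hjM⟩
        exact this
      · obtain ⟨k, hk⟩ := Fin.exists_succAbove_eq (show j ≠ j0 from hj)
        rw [← hk]
        exact congrFun h2 k
    have hrw : S1 = ∑ a : Fin (m+1) → Fin d, Complex.normSq (F ((ι a).1)) := by
      rw [hS1]
      exact Finset.sum_congr rfl (fun a _ => by rw [hFf])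
    rw [hrw]
    have himg : ∑ a : Fin (m+1) → Fin d, Complex.normSq (F ((ι a).1))
        = ∑ y ∈ Finset.univ.image ι, Complex.normSq (F y.1) := by
      rw [Finset.sum_image (fun a _ b _ h => hinj h)]
    rw [himg]
    refine le_trans (Finset.sum_le_sum_of_subset_of_nonneg (Finset.subset_univ _)
      (fun _ _ _ => Complex.normSq_nonneg _)) ?_
    apply le_of_eq
    rw [Fintype.sum_prod_type]
    simp only [Finset.sum_const, Finset.card_univ, Fintype.card_fun, Fintype.card_fin,
      nsmul_eq_mul, Nat.cast_pow]
    rw [hSF, Finset.mul_sum]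
  have hS2le : S2 ≤ SG := by
    set ι2 : (Fin (m+1) → Fin d) → ((i : {i // ¬ i ∈ M}) → starH d m i) :=
      fun a => (e (diagX d m a)).2 with hι2
    have hinj2 : Function.Injective ι2 := by
      intro a b hab
      have := congrFun hab ⟨none, hnM⟩
      exact this
    have hrw : S2 = ∑ a : Fin (m+1) → Fin d, Complex.normSq (G (ι2 a)) := by
      rw [hS2]
      exact Finset.sum_congr rfl (fun a _ => by rw [hGg])
    rw [hrw]
    have himg2 : ∑ a : Fin (m+1) → Fin d, Complex.normSq (G (ι2 a))
        = ∑ v ∈ Finset.univ.image ι2, Complex.normSq (G v) := by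
      rw [Finset.sum_image (fun a _ b _ h => hinj2 h)]
    rw [himg2]
    exact Finset.sum_le_sum_of_subset_of_nonneg (Finset.subset_univ _)
      (fun _ _ _ => Complex.normSq_nonneg _)
  have hS2nn : 0 ≤ S2 := Finset.sum_nonneg (fun _ _ => Complex.normSq_nonneg _)
  have hSFnn : 0 ≤ SF := Finset.sum_nonneg (fun _ _ => Complex.normSq_nonneg _)
  calc Complex.normSq (∑ a : Fin (m+1) → Fin d, f (diagX d m a) * g (diagX d m a))
      ≤ S1 * S2 := hCS
    _ ≤ ((d:ℝ)^m * SF) * SG := by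
        apply mul_le_mul hS1le hS2le hS2nn
        positivity
    _ = (d:ℝ)^m := by rw [mul_assoc, hsplit, mul_one]

lemma bisep_bound (d m : ℕ) (hd : 1 ≤ d)
    (ψ : ((i : Option (Fin (m+1))) → starH d m i) → ℂ)
    (hnorm : ∑ x, Complex.normSq (ψ x) = 1)
    (hb : PureBiseparable ψ) :
    Complex.normSq (∑ a : Fin (m+1) → Fin d, ψ (diagX d m a)) ≤ (d:ℝ)^m := by
  classical
  obtain ⟨M, hMne, hMuniv, f, g, hfg, hf, hg⟩ := hb
  have hS : (∑ a : Fin (m+1) → Fin d, ψ (diagX d m a))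
      = ∑ a : Fin (m+1) → Fin d, f (diagX d m a) * g (diagX d m a) :=
    Finset.sum_congr rfl (fun a _ => hfg _)
  rw [hS]
  by_cases hnM : none ∈ M
  · obtain ⟨i, hi⟩ : ∃ i, i ∉ M := by
      by_contra h
      push_neg at h
      exact hMuniv (Finset.eq_univ_iff_forall.mpr h)
    obtain ⟨j0, rfl⟩ : ∃ j0, i = some j0 := by
      cases i with
      | none => exact absurd hnM hi
      | some j => exact ⟨j, rfl⟩
    have hres := helper_bound d m hd Mᶜ j0 (by simpa using hnM) (by simpa using hi) g f
      (fun x y h => hg x y (fun i hiM => h i (Finset.mem_compl.mpr hiM)))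
      (fun x y h => hf x y (fun i hiM => h i (by simp [Finset.mem_compl, hiM])))
      (by rw [← hnorm]
          exact Finset.sum_congr rfl (fun x _ => by rw [hfg, mul_comm]))
    calc Complex.normSq (∑ a : Fin (m+1) → Fin d, f (diagX d m a) * g (diagX d m a))
        = Complex.normSq (∑ a : Fin (m+1) → Fin d, g (diagX d m a) * f (diagX d m a)) := by
          congr 1
          exact Finset.sum_congr rfl (fun a _ => mul_comm _ _)
      _ ≤ (d:ℝ)^m := hres
  · obtain ⟨i, hi⟩ := hMne
    obtain ⟨j0, rfl⟩ : ∃ j0, i = some j0 := by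
      cases i with
      | none => exact absurd hi hnM
      | some j => exact ⟨j, rfl⟩
    exact helper_bound d m hd M j0 hnM hi f g hf hg
      (by rw [← hnorm]; exact Finset.sum_congr rfl (fun x _ => by rw [hfg]))

lemma tau_diag_sum (d m : ℕ) (hd : 1 ≤ d) (p : ℝ) :
    ∑ a : Fin (m+1) → Fin d, ∑ b : Fin (m+1) → Fin d,
        tauStar d m p (diagX d m a) (diagX d m b)
      = (((p * d + (1-p)/d) * (d:ℝ)^m : ℝ) : ℂ) := by
  classical
  have hd0 : (0:ℝ) < d := by exact_mod_cast hd
  have hdC : (d:ℂ) ≠ 0 := by exact_mod_cast (Nat.pos_of_ne_zero (by omega)).ne'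
  set K : Fin (m+1) → Fin d × Fin d → ℂ :=
    fun j q => (if j = 0 then iso d p else phiPlus d) (q.1, q.1) (q.2, q.2) with hK
  have h1 : ∀ a b : Fin (m+1) → Fin d,
      tauStar d m p (diagX d m a) (diagX d m b) = ∏ j, K j (a j, b j) := fun a b => rfl
  simp only [h1]
  have h2a : (∑ y : (Fin (m+1) → Fin d) × (Fin (m+1) → Fin d), ∏ j, K j (y.1 j, y.2 j))
      = ∑ a : Fin (m+1) → Fin d, ∑ b : Fin (m+1) → Fin d, ∏ j, K j (a j, b j) :=
    Fintype.sum_prod_type _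
  have h2 : (∑ y : (Fin (m+1) → Fin d) × (Fin (m+1) → Fin d), ∏ j, K j (y.1 j, y.2 j))
      = ∑ c : Fin (m+1) → Fin d × Fin d, ∏ j, K j (c j) :=
    Fintype.sum_equiv (Equiv.arrowProdEquivProdArrow (Fin (m+1)) (fun _ => Fin d) (fun _ => Fin d)).symm
      _ _ (fun y => rfl)
  rw [← h2a, h2]
  have h3 : (∑ c : Fin (m+1) → Fin d × Fin d, ∏ j, K j (c j))
      = ∏ j, ∑ q : Fin d × Fin d, K j q := by
    rw [Finset.prod_univ_sum (fun _ => Finset.univ) K, Fintype.piFinset_univ]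
  rw [h3]
  have hA : ∑ q : Fin d × Fin d, K 0 q = ((p * d + (1-p)/d : ℝ) : ℂ) := by
    simp only [hK, if_pos rfl, iso, phiPlus, Matrix.add_apply, Matrix.smul_apply,
      Matrix.one_apply, Prod.mk.injEq, and_self, if_true, smul_eq_mul]
    rw [Fintype.sum_prod_type]
    simp only [Finset.sum_add_distrib, Finset.sum_ite_eq, Finset.mem_univ, if_true,
      mul_ite, mul_one, mul_zero]
    simp only [Finset.sum_const, Finset.card_univ, Fintype.card_fin, nsmul_eq_mul]
    push_cast
    field_simp
  have hB : ∀ j : Fin (m+1), j ≠ 0 → ∑ q : Fin d × Fin d, K j q = (d : ℂ) := by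
    intro j hj
    simp only [hK, if_neg hj, phiPlus, Prod.mk.injEq, and_self, if_true]
    simp only [Finset.sum_const, Finset.card_univ, Fintype.card_prod, Fintype.card_fin,
      nsmul_eq_mul]
    push_cast
    field_simp
  rw [← Finset.mul_prod_erase Finset.univ _ (Finset.mem_univ (0 : Fin (m+1)))]
  rw [hA, Finset.prod_congr rfl (fun j hj => hB j (Finset.ne_of_mem_erase hj))]
  rw [Finset.prod_const, Finset.card_erase_of_mem (Finset.mem_univ _), Finset.card_univ,
    Fintype.card_fin]
  push_cast
  ring

/-- **Lemma (GME of the star network with one isotropic edge).**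
For `n = m + 2 ≥ 3` parties and `d ≥ 2`, if the isotropic edge is entangled, i.e.
`p > 1/(d+1)`, then the star PEN state `τ(p)` is genuinely multipartite entangled. -/
theorem tauStar_GME (d m : ℕ) (hd : 2 ≤ d) (hm : 1 ≤ m) (p : ℝ) (hp1 : p ≤ 1)
    (hp : 1 / ((d : ℝ) + 1) < p) :
    ¬ Biseparable (tauStar d m p) := by
  rintro ⟨k, w, ψ, hw, hwsum, hbisep, hnormal, hρ⟩
  have hd1 : 1 ≤ d := le_trans one_le_two hd
  have hdR : (2:ℝ) ≤ (d:ℝ) := by exact_mod_cast hd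
  have hd0 : (0:ℝ) < (d:ℝ) := by linarith
  set S : Fin k → ℂ := fun t => ∑ a : Fin (m+1) → Fin d, ψ t (diagX d m a) with hSdef
  have hkey : ∀ t, Complex.normSq (S t) ≤ (d:ℝ)^m :=
    fun t => bisep_bound d m hd1 (ψ t) (hnormal t) (hbisep t)
  have hW : (∑ a : Fin (m+1) → Fin d, ∑ b : Fin (m+1) → Fin d,
        tauStar d m p (diagX d m a) (diagX d m b))
      = ((∑ t, w t * Complex.normSq (S t) : ℝ) : ℂ) := by
    rw [hρ]
    have hab : ∀ a b : Fin (m+1) → Fin d,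
        (∑ t, (w t : ℂ) • vecProj (ψ t)) (diagX d m a) (diagX d m b)
        = ∑ t, (w t : ℂ) * (ψ t (diagX d m a) * (starRingEnd ℂ) (ψ t (diagX d m b))) := by
      intro a b
      simp [Matrix.sum_apply, Matrix.smul_apply, vecProj, smul_eq_mul]
    rw [Finset.sum_congr rfl (fun a _ => Finset.sum_congr rfl (fun b _ => hab a b))]
    rw [Finset.sum_congr rfl (fun a (_ : a ∈ Finset.univ) => Finset.sum_comm)]
    rw [Finset.sum_comm]
    have hterm : ∀ t, (∑ a : Fin (m+1) → Fin d, ∑ b : Fin (m+1) → Fin d,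
          (w t : ℂ) * (ψ t (diagX d m a) * (starRingEnd ℂ) (ψ t (diagX d m b))))
        = (w t : ℂ) * ((Complex.normSq (S t) : ℝ) : ℂ) := by
      intro t
      rw [show (((Complex.normSq (S t) : ℝ)) : ℂ) = S t * (starRingEnd ℂ) (S t) from
        (Complex.mul_conj _).symm]
      rw [hSdef]
      simp only [map_sum]
      rw [Finset.sum_mul_sum]
      rw [Finset.mul_sum]
      refine Finset.sum_congr rfl (fun a _ => ?_)
      rw [Finset.mul_sum]
    rw [Finset.sum_congr rfl (fun t _ => hterm t)]
    push_cast
    rfl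
  have heq : (p * d + (1-p)/d) * (d:ℝ)^m = ∑ t, w t * Complex.normSq (S t) := by
    have := (tau_diag_sum d m hd1 p).symm.trans hW
    exact_mod_cast this
  have hsum_le : ∑ t, w t * Complex.normSq (S t) ≤ (d:ℝ)^m := by
    calc ∑ t, w t * Complex.normSq (S t)
        ≤ ∑ t, w t * (d:ℝ)^m :=
          Finset.sum_le_sum (fun t _ => mul_le_mul_of_nonneg_left (hkey t) (hw t))
      _ = (d:ℝ)^m := by rw [← Finset.sum_mul, hwsum, one_mul]
  have h1lt : 1 < p * (d:ℝ) + (1-p)/d := by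
    have hpd : 1 < p * ((d:ℝ) + 1) := by
      rw [div_lt_iff₀ (by linarith)] at hp
      linarith
    have hid : p * (d:ℝ) + (1-p)/d - 1 = (p * ((d:ℝ)+1) - 1) * ((d:ℝ) - 1) / d := by
      field_simp
      ring
    have hpos : 0 < (p * ((d:ℝ)+1) - 1) * ((d:ℝ) - 1) / d :=
      div_pos (mul_pos (by linarith) (by linarith)) hd0
    linarith [hid ▸ hpos]
  have hpow : (0:ℝ) < (d:ℝ)^m := pow_pos hd0 m
  nlinarith [heq, hsum_le, h1lt, hpow]
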